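/- The set F = {S(a,b) : a, b in F_q} is a subgroup of GL(4,q) of order q^2, where q = 2^(2m+1). -/

import Mathlib

open Matrix

noncomputable section

/-- The matrix `S(a, b)` generating the Frobenius kernel of a point stabiliser in `Sz(q)`. -/
def Smat {F : Type*} [Field F] (t : ℕ) (a b : F) : Matrix (Fin 4) (Fin 4) F :=
  !![1, 0, 0, 0;
     a, 1, 0, 0;
     b, a ^ t, 1, 0;
     a ^ (2 + t) + a * b + b ^ t, a ^ (1 + t) + b, a, 1]

section Aux

variable {F : Type*} [Field F]

lemma Smat_mul (t : ℕ) (htwo : (2 : F) = 0)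
    (hf : ∀ x y : F, (x + y) ^ t = x ^ t + y ^ t)
    (hq : ∀ x : F, (x ^ t) ^ t = x ^ 2) (a b c d : F) :
    Smat t a b * Smat t c d = Smat t (a + c) (b + d + a ^ t * c) := by
  have hp1 : ∀ x : F, x ^ (1 + t) = x * x ^ t := by
    intro x; rw [pow_add, pow_one]
  have hp2 : ∀ x : F, x ^ (2 + t) = x ^ 2 * x ^ t := by
    intro x; rw [pow_add]
  ext i j
  fin_cases i <;> fin_cases j <;>
    simp [Smat, Matrix.mul_apply, Fin.sum_univ_four, hp1, hp2, hf, mul_pow, hq]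
  all_goals ring_nf
  all_goals
    first
      | linear_combination (-(a ^ t * c)) * htwo
      | linear_combination (-(a^2*c^t + a*c*a^t + a*c*c^t + a^t*c^2)) * htwo

lemma Smat_zero (t : ℕ) (ht : t ≠ 0) : (Smat t 0 0 : Matrix (Fin 4) (Fin 4) F) = 1 := by
  have h1 : (1 : ℕ) + t ≠ 0 := by omega
  have h2 : (2 : ℕ) + t ≠ 0 := by omega
  ext i j
  fin_cases i <;> fin_cases j <;>
    simp [Smat, Matrix.one_apply, zero_pow, ht, h1, h2, Matrix.vecHead, Matrix.vecTail]

end Aux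

/-- The set `{S(a,b) : a, b ∈ F_q}` is (the underlying set of matrices of) a subgroup of
`GL(4,q)` of order `q²`, where `q = 2^(2m+1)`. -/
theorem Smat_subgroup (m : ℕ) (F : Type*) [Field F] [Fintype F]
    (hF : Fintype.card F = 2 ^ (2 * m + 1)) :
    ∃ H : Subgroup (GL (Fin 4) F),
      {M : Matrix (Fin 4) (Fin 4) F | ∃ g ∈ H, (g : Matrix (Fin 4) (Fin 4) F) = M} =
        {M : Matrix (Fin 4) (Fin 4) F | ∃ a b : F, M = Smat (2 ^ (m + 1)) a b} ∧
      Nat.card H = (Fintype.card F) ^ 2 := by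
  set t : ℕ := 2 ^ (m + 1) with ht_def
  have ht : t ≠ 0 := (pow_pos (by norm_num) (m + 1)).ne'
  -- characteristic 2
  haveI hchar : CharP F 2 := by
    obtain ⟨n, hp, hcard⟩ := FiniteField.card F (ringChar F)
    have hdvd : ringChar F ∣ 2 ^ (2 * m + 1) := by
      rw [← hF, hcard]
      exact dvd_pow_self _ n.2.ne'
    have h2 : ringChar F = 2 :=
      (Nat.prime_dvd_prime_iff_eq hp Nat.prime_two).mp (hp.dvd_of_dvd_pow hdvd)
    exact h2 ▸ ringChar.charP F
  haveI : Fact (Nat.Prime 2) := ⟨Nat.prime_two⟩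
  have htwo : (2 : F) = 0 := by
    simpa using CharP.cast_eq_zero F 2
  have hf : ∀ x y : F, (x + y) ^ t = x ^ t + y ^ t := fun x y =>
    add_pow_char_pow x y 2 (m + 1)
  have ht2 : t * t = 2 ^ (2 * m + 1) * 2 := by
    rw [← pow_add, show 2 ^ (2 * m + 1) * 2 = 2 ^ (2 * m + 1 + 1) from (pow_succ 2 _).symm]
    congr 1
    omega
  have hq : ∀ x : F, (x ^ t) ^ t = x ^ 2 := by
    intro x
    rw [← pow_mul, ht2, ← hF, pow_mul, FiniteField.pow_card]
  have key := Smat_mul t htwo hf hq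
  have hxx : ∀ x : F, x + x = 0 := by
    intro x
    have : (2 : F) * x = 0 := by rw [htwo, zero_mul]
    linear_combination this
  -- the explicit inverse
  have hinv : ∀ a b : F, Smat t a b * Smat t a (b + a ^ (1 + t)) = 1 := by
    intro a b
    rw [key]
    have e1 : a + a = 0 := hxx a
    have e2 : b + (b + a ^ (1 + t)) + a ^ t * a = 0 := by
      have : a ^ t * a = a ^ (1 + t) := by rw [pow_add, pow_one]; ring
      rw [this]
      linear_combination hxx b + hxx (a ^ (1 + t))
    rw [e1, e2, Smat_zero t ht]
  have hinv' : ∀ a b : F, Smat t a (b + a ^ (1 + t)) * Smat t a b = 1 := by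
    intro a b
    rw [key]
    have e1 : a + a = 0 := hxx a
    have e2 : b + a ^ (1 + t) + b + a ^ t * a = 0 := by
      have : a ^ t * a = a ^ (1 + t) := by rw [pow_add, pow_one]; ring
      rw [this]
      linear_combination hxx b + hxx (a ^ (1 + t))
    rw [e1, e2, Smat_zero t ht]
  -- units
  let U : F → F → GL (Fin 4) F := fun a b =>
    ⟨Smat t a b, Smat t a (b + a ^ (1 + t)), hinv a b, hinv' a b⟩
  have hUval : ∀ a b : F, ((U a b : GL (Fin 4) F) : Matrix (Fin 4) (Fin 4) F) = Smat t a b :=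
    fun _ _ => rfl
  -- the subgroup
  refine ⟨{ carrier := {g : GL (Fin 4) F | ∃ a b : F, (g : Matrix (Fin 4) (Fin 4) F) = Smat t a b}
            mul_mem' := ?_
            one_mem' := ?_
            inv_mem' := ?_ }, ?_, ?_⟩
  · rintro g h ⟨a, b, hg⟩ ⟨c, d, hh⟩
    exact ⟨a + c, b + d + a ^ t * c, by rw [Units.val_mul, hg, hh, key]⟩
  · exact ⟨0, 0, by rw [Units.val_one, Smat_zero t ht]⟩
  · rintro g ⟨a, b, hg⟩
    have hgU : g = U a b := Units.ext hg
    refine ⟨a, b + a ^ (1 + t), ?_⟩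
    rw [hgU]
    rfl
  · ext M
    constructor
    · rintro ⟨g, ⟨a, b, hg⟩, rfl⟩
      exact ⟨a, b, hg⟩
    · rintro ⟨a, b, rfl⟩
      exact ⟨U a b, ⟨a, b, rfl⟩, rfl⟩
  · -- cardinality
    have hbij : Function.Bijective
        (fun p : F × F =>
          (⟨U p.1 p.2, ⟨p.1, p.2, rfl⟩⟩ :
            {g : GL (Fin 4) F // ∃ a b : F, (g : Matrix (Fin 4) (Fin 4) F) = Smat t a b})) := by
      constructor
      · rintro ⟨a, b⟩ ⟨c, d⟩ h
        have hm : Smat t a b = Smat t c d := by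
          have := congrArg (fun x => ((x : GL (Fin 4) F) : Matrix (Fin 4) (Fin 4) F))
            (Subtype.ext_iff.mp h)
          simpa [hUval] using this
        have ha : a = c := by
          have := congrFun (congrFun hm 1) 0
          simpa [Smat] using this
        have hb : b = d := by
          have := congrFun (congrFun hm 2) 0
          simpa [Smat] using this
        simp [ha, hb]
      · rintro ⟨g, a, b, hg⟩
        exact ⟨(a, b), Subtype.ext (Units.ext hg).symm⟩
    have := Nat.card_eq_of_bijective _ hbij
    rw [Nat.card_prod, Nat.card_eq_fintype_card] at this
    rw [pow_two]
    exact this.symm
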